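/- arXiv:1605.04679 — 2 statements merged into one kernel-verified Lean document; each statement's English description precedes it below -/
import Mathlib

section
/- Let G = (V,E) be a finite simple graph that is completely leaf-removable. Then the minimum vertex cover number equals the maximum matching number: τ(G) = ν(G). (In other words, on completely leaf-removable graphs the primal integer program and its dual integer program have equal optimal values.) -/
open Finset

variable {V : Type*} [Fintype V] [DecidableEq V]

/-- A fractional vertex cover of `G`. -/
def IsFracCover (G : SimpleGraph V) (x : V → ℝ) : Prop :=
  (∀ v, 0 ≤ x v ∧ x v ≤ 1) ∧ ∀ ⦃u v⦄, G.Adj u v → 1 ≤ x u + x v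

/-- The optimum value of the LP relaxation of minimum vertex cover. -/
noncomputable def LPopt (G : SimpleGraph V) : ℝ :=
  sInf {s : ℝ | ∃ x : V → ℝ, IsFracCover G x ∧ s = ∑ v, x v}

/-- `C` is a vertex cover of `G`. -/
def IsVC (G : SimpleGraph V) (C : Finset V) : Prop :=
  ∀ ⦃u v⦄, G.Adj u v → u ∈ C ∨ v ∈ C

/-- The vertex cover number `τ(G)`. -/
noncomputable def tau (G : SimpleGraph V) : ℕ :=
  sInf {n : ℕ | ∃ C : Finset V, IsVC G C ∧ C.card = n}

/-- `M` is a set of pairwise vertex-disjoint edges of `G`. -/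
def IsMatchingSet (G : SimpleGraph V) (M : Finset (Sym2 V)) : Prop :=
  (∀ e ∈ M, e ∈ G.edgeSet) ∧
  ∀ e ∈ M, ∀ f ∈ M, e ≠ f → ∀ v : V, ¬(v ∈ e ∧ v ∈ f)

/-- The matching number `ν(G)`. -/
noncomputable def nu (G : SimpleGraph V) : ℕ :=
  sSup {n : ℕ | ∃ M : Finset (Sym2 V), IsMatchingSet G M ∧ M.card = n}

/-- The graph obtained from `G` by deleting vertex `v` together with all
edges incident to `v` (the vertex set is kept, `v` becomes isolated). -/
def delVert {V : Type*} (G : SimpleGraph V) (v : V) : SimpleGraph V where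
  Adj a b := G.Adj a b ∧ a ≠ v ∧ b ≠ v
  symm := ⟨fun a b h => ⟨h.1.symm, h.2.2, h.2.1⟩⟩
  loopless := ⟨fun a h => G.irrefl h.1⟩

/-- `G` is completely leaf-removable: either `G` has no edges, or there is a
vertex `w` of degree one with unique neighbour `v` such that deleting `v`
(and all edges incident to it) yields a completely leaf-removable graph. -/
inductive CompletelyLeafRemovable {V : Type*} : SimpleGraph V → Prop
  | empty (G : SimpleGraph V) (h : ∀ a b : V, ¬ G.Adj a b) : CompletelyLeafRemovable G
  | step (G : SimpleGraph V) (w v : V) (hadj : G.Adj w v)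
      (huniq : ∀ u : V, G.Adj w u → u = v)
      (h : CompletelyLeafRemovable (delVert G v)) : CompletelyLeafRemovable G

/-- A fractional matching of `G`, encoded as a function on `Sym2 V` vanishing
off the edge set of `G`. -/
def IsFracMatching (G : SimpleGraph V) (y : Sym2 V → ℝ) : Prop :=
  (∀ e ∈ G.edgeSet, 0 ≤ y e) ∧ (∀ e, e ∉ G.edgeSet → y e = 0) ∧
  ∀ v : V, ∑ e ∈ Finset.univ.filter (fun e : Sym2 V => v ∈ e), y e ≤ 1

/-- The value of a fractional matching. -/
noncomputable def FMvalue (y : Sym2 V → ℝ) : ℝ := ∑ e : Sym2 V, y e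


lemma matching_card_le_cover {G : SimpleGraph V} {M : Finset (Sym2 V)} {C : Finset V}
    (hM : IsMatchingSet G M) (hC : IsVC G C) : M.card ≤ C.card := by
  classical
  have key : ∀ e ∈ M, ∃ u, u ∈ C ∧ u ∈ e := by
    intro e he
    have hmem := hM.1 e he
    induction e using Sym2.ind with
    | _ a b =>
      rw [SimpleGraph.mem_edgeSet] at hmem
      rcases hC hmem with h | h
      · exact ⟨a, h, Sym2.mem_mk_left a b⟩
      · exact ⟨b, h, Sym2.mem_mk_right a b⟩
  set f : Sym2 V → V := fun e => if h : ∃ u, u ∈ C ∧ u ∈ e then h.choose else e.out.1 with hf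
  apply Finset.card_le_card_of_injOn f
  · intro e he
    have h := key e he
    simp only [hf, dif_pos h]
    exact h.choose_spec.1
  · intro e he e' he' heq
    by_contra hne
    have h := key e he
    have h' := key e' he'
    have h1 : f e ∈ e := by simp only [hf, dif_pos h]; exact h.choose_spec.2
    have h2 : f e' ∈ e' := by simp only [hf, dif_pos h']; exact h'.choose_spec.2
    exact hM.2 e he e' he' hne (f e) ⟨h1, heq ▸ h2⟩

lemma nu_bddAbove (G : SimpleGraph V) :
    BddAbove {n : ℕ | ∃ M : Finset (Sym2 V), IsMatchingSet G M ∧ M.card = n} := by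
  refine ⟨Fintype.card (Sym2 V), ?_⟩
  rintro n ⟨M, _, rfl⟩
  exact M.card_le_univ

lemma nu_nonempty (G : SimpleGraph V) :
    {n : ℕ | ∃ M : Finset (Sym2 V), IsMatchingSet G M ∧ M.card = n}.Nonempty :=
  ⟨0, ∅, ⟨fun e he => absurd he (Finset.notMem_empty e),
    fun e he => absurd he (Finset.notMem_empty e)⟩, rfl⟩

lemma tau_nonempty (G : SimpleGraph V) :
    {n : ℕ | ∃ C : Finset V, IsVC G C ∧ C.card = n}.Nonempty :=
  ⟨Finset.univ.card, Finset.univ, fun u _ _ => Or.inl (Finset.mem_univ u), rfl⟩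

lemma nu_le_tau (G : SimpleGraph V) : nu G ≤ tau G := by
  obtain ⟨C, hC, hCcard⟩ := Nat.sInf_mem (tau_nonempty G)
  refine csSup_le (nu_nonempty G) ?_
  rintro n ⟨M, hM, rfl⟩
  calc M.card ≤ C.card := matching_card_le_cover hM hC
    _ = tau G := hCcard

/-- If `G` is completely leaf-removable then the minimum vertex cover
number equals the maximum matching number. -/
theorem tau_eq_nu_of_completelyLeafRemovable (G : SimpleGraph V)
    (h : CompletelyLeafRemovable G) :
    tau G = nu G := by
  induction h with
  | empty G h =>
    have htau : tau G = 0 := by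
      have : (0 : ℕ) ∈ {n : ℕ | ∃ C : Finset V, IsVC G C ∧ C.card = n} :=
        ⟨∅, fun u v huv => absurd huv (h u v), Finset.card_empty⟩
      exact Nat.eq_zero_of_le_zero (Nat.sInf_le this)
    have hnu : nu G = 0 := by
      refine Nat.eq_zero_of_le_zero (csSup_le (nu_nonempty G) ?_)
      rintro n ⟨M, hM, rfl⟩
      have : M = ∅ := by
        ext e
        simp only [Finset.notMem_empty, iff_false]
        intro he
        have hmem := hM.1 e he
        induction e using Sym2.ind with
        | _ a b => exact h a b (G.mem_edgeSet.mp hmem)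
      simp [this]
    rw [htau, hnu]
  | step G w v hadj huniq h ih =>
    refine le_antisymm ?_ (nu_le_tau G)
    -- tau G ≤ tau (delVert G v) + 1
    obtain ⟨C, hC, hCcard⟩ := Nat.sInf_mem (tau_nonempty (delVert G v))
    have h1 : tau G ≤ tau (delVert G v) + 1 := by
      have hcov : IsVC G (insert v C) := by
        intro a b hab
        by_cases ha : a = v
        · exact Or.inl (ha ▸ Finset.mem_insert_self v C)
        by_cases hb : b = v
        · exact Or.inr (hb ▸ Finset.mem_insert_self v C)
        rcases hC (show (delVert G v).Adj a b from ⟨hab, ha, hb⟩) with h | h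
        · exact Or.inl (Finset.mem_insert_of_mem h)
        · exact Or.inr (Finset.mem_insert_of_mem h)
      calc tau G ≤ (insert v C).card := Nat.sInf_le ⟨insert v C, hcov, rfl⟩
        _ ≤ C.card + 1 := Finset.card_insert_le v C
        _ = tau (delVert G v) + 1 := by rw [hCcard]; rfl
    -- nu (delVert G v) + 1 ≤ nu G
    obtain ⟨M, hM, hMcard⟩ := Nat.sSup_mem (nu_nonempty (delVert G v)) (nu_bddAbove (delVert G v))
    have hvnotin : ∀ e ∈ M, v ∉ e ∧ w ∉ e := by
      intro e he
      have hmem := hM.1 e he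
      induction e using Sym2.ind with
      | _ a b =>
        rw [SimpleGraph.mem_edgeSet] at hmem
        obtain ⟨hab, ha, hb⟩ := hmem
        constructor
        · simp only [Sym2.mem_iff]
          rintro (rfl | rfl)
          · exact ha rfl
          · exact hb rfl
        · simp only [Sym2.mem_iff]
          rintro (rfl | rfl)
          · exact hb (huniq b hab)
          · exact ha (huniq a hab.symm)
    have henotin : s(w, v) ∉ M := fun hmem =>
      (hvnotin _ hmem).1 (Sym2.mem_mk_right w v)
    have hmatch : IsMatchingSet G (insert s(w, v) M) := by
      constructor
      · intro e he
        rcases Finset.mem_insert.mp he with rfl | he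
        · exact G.mem_edgeSet.mpr hadj
        · have hmem := hM.1 e he
          induction e using Sym2.ind with
          | _ a b => exact G.mem_edgeSet.mpr ((delVert G v).mem_edgeSet.mp hmem).1
      · intro e he f hf hef u ⟨hue, huf⟩
        rcases Finset.mem_insert.mp he with rfl | he <;>
          rcases Finset.mem_insert.mp hf with rfl | hf
        · exact hef rfl
        · rcases Sym2.mem_iff.mp hue with h | h
          · exact (hvnotin f hf).2 (h ▸ huf)
          · exact (hvnotin f hf).1 (h ▸ huf)
        · rcases Sym2.mem_iff.mp huf with h | h
          · exact (hvnotin e he).2 (h ▸ hue)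
          · exact (hvnotin e he).1 (h ▸ hue)
        · exact hM.2 e he f hf hef u ⟨hue, huf⟩
    have h2 : nu (delVert G v) + 1 ≤ nu G := by
      have : (insert s(w, v) M).card = nu (delVert G v) + 1 := by
        rw [Finset.card_insert_of_notMem henotin, hMcard]; rfl
      exact this ▸ le_csSup (nu_bddAbove G) ⟨insert s(w, v) M, hmatch, rfl⟩
    calc tau G ≤ tau (delVert G v) + 1 := h1
      _ = nu (delVert G v) + 1 := by rw [ih]
      _ ≤ nu G := h2
end

section
/- (Half-integrality of LP-relaxed vertex cover, Nemhauser–Trotter.) Let G = (V,E) be a finite simple graph. Then there exists a fractional vertex cover x of G attaining the LP optimum, i.e. ∑_{v∈V} x(v) = LP(G), such that x(v) ∈ {0, 1/2, 1} for every vertex v. -/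
open Finset

variable {V : Type*} [Fintype V] [DecidableEq V]

set_option linter.unusedSectionVars false

open scoped Classical in
noncomputable def badSet (x : V → ℝ) : Finset V :=
  Finset.univ.filter (fun v => ¬(x v = 0 ∨ x v = 1/2 ∨ x v = 1))

open scoped Classical in
noncomputable def pertF (x : V → ℝ) (ε : ℝ) : V → ℝ :=
  fun v => if 0 < x v ∧ x v < 1/2 then x v - ε
    else if 1/2 < x v ∧ x v < 1 then x v + ε else x v

lemma triple_of {a : ℝ} (h0 : 0 ≤ a) (h1 : a ≤ 1)
    (hA : ¬(0 < a ∧ a < 1/2)) (hB : ¬(1/2 < a ∧ a < 1)) :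
    a = 0 ∨ a = 1/2 ∨ a = 1 := by
  rcases not_and_or.mp hA with h | h <;> rcases not_and_or.mp hB with h' | h' <;>
    push_neg at h h' <;>
    first
      | (left; linarith)
      | (right; left; linarith)
      | (right; right; linarith)

lemma pert_spec (x : V → ℝ) (ε : ℝ) (v : V) (h0 : 0 ≤ x v) (h1 : x v ≤ 1) :
    (0 < x v ∧ x v < 1/2 ∧ pertF x ε v = x v - ε) ∨
    (1/2 < x v ∧ x v < 1 ∧ pertF x ε v = x v + ε) ∨
    ((x v = 0 ∨ x v = 1/2 ∨ x v = 1) ∧ pertF x ε v = x v) := by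
  unfold pertF
  split_ifs with hA hB
  · exact Or.inl ⟨hA.1, hA.2, rfl⟩
  · exact Or.inr (Or.inl ⟨hB.1, hB.2, rfl⟩)
  · exact Or.inr (Or.inr ⟨triple_of h0 h1 hA hB, rfl⟩)

open scoped Classical in
lemma pert_lemma (G : SimpleGraph V) (x : V → ℝ) (hx : IsFracCover G x) (ε : ℝ)
    (hA : ∀ v, 0 < x v → x v < 1/2 → 0 ≤ x v - ε ∧ x v - ε ≤ 1/2)
    (hB : ∀ v, 1/2 < x v → x v < 1 → 1/2 ≤ x v + ε ∧ x v + ε ≤ 1) :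
    IsFracCover G (pertF x ε) ∧
    ∑ v, pertF x ε v = ∑ v, x v + ε *
      (((Finset.univ.filter (fun v => 1/2 < x v ∧ x v < 1)).card : ℝ) -
       ((Finset.univ.filter (fun v => 0 < x v ∧ x v < 1/2)).card : ℝ)) ∧
    badSet (pertF x ε) ⊆ badSet x := by
  obtain ⟨hb, hc⟩ := hx
  refine ⟨⟨?_, ?_⟩, ?_, ?_⟩
  · intro v
    obtain ⟨h0, h1⟩ := hb v
    rcases pert_spec x ε v h0 h1 with ⟨p, q, he⟩ | ⟨p, q, he⟩ | ⟨p, he⟩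
    · have := hA v p q; rw [he]; exact ⟨this.1, by linarith [this.2]⟩
    · have := hB v p q; rw [he]; exact ⟨by linarith [this.1], this.2⟩
    · rw [he]; exact ⟨h0, h1⟩
  · intro u v huv
    have hsum := hc huv
    obtain ⟨hu0, hu1⟩ := hb u
    obtain ⟨hv0, hv1⟩ := hb v
    rcases pert_spec x ε u hu0 hu1 with ⟨pu, qu, heu⟩ | ⟨pu, qu, heu⟩ | ⟨pu, heu⟩ <;>
      rcases pert_spec x ε v hv0 hv1 with ⟨pv, qv, hev⟩ | ⟨pv, qv, hev⟩ | ⟨pv, hev⟩ <;>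
      rw [heu, hev]
    · linarith
    · linarith
    · have h' := hA u pu qu
      rcases pv with h | h | h <;> linarith [h'.1]
    · linarith
    · have h1' := hB u pu qu
      have h2' := hB v pv qv
      linarith [h1'.1, h2'.1]
    · have h' := hB u pu qu
      rcases pv with h | h | h <;> linarith [h'.1]
    · have h' := hA v pv qv
      rcases pu with h | h | h <;> linarith [h'.1]
    · have h' := hB v pv qv
      rcases pu with h | h | h <;> linarith [h'.1]
    · linarith
  · have hpt : ∀ v, pertF x ε v =
        x v + (if 1/2 < x v ∧ x v < 1 then ε else 0) -
          (if 0 < x v ∧ x v < 1/2 then ε else 0) := by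
      intro v
      unfold pertF
      split_ifs with h1 h2 <;> try ring
      · exact absurd h2 (by rintro ⟨a, b⟩; linarith [h1.1, h1.2])
    rw [Finset.sum_congr rfl (fun v _ => hpt v)]
    rw [Finset.sum_sub_distrib, Finset.sum_add_distrib]
    rw [← Finset.sum_filter, ← Finset.sum_filter]
    simp [Finset.sum_const, nsmul_eq_mul]
    ring
  · intro v hv
    simp only [badSet, Finset.mem_filter, Finset.mem_univ, true_and] at hv ⊢
    intro hgood
    apply hv
    have : pertF x ε v = x v := by
      unfold pertF
      rcases hgood with h | h | h <;> rw [h] <;> norm_num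
    rw [this]; exact hgood

open scoped Classical in
lemma mem_badSet_iff (x : V → ℝ) (v : V) :
    v ∈ badSet x ↔ ¬(x v = 0 ∨ x v = 1/2 ∨ x v = 1) := by
  simp [badSet]

open scoped Classical in
lemma step_lemma (G : SimpleGraph V) (x : V → ℝ) (hx : IsFracCover G x)
    (hbad : (badSet x).Nonempty) :
    ∃ y : V → ℝ, IsFracCover G y ∧ (badSet y).card < (badSet x).card ∧
      ∑ v, y v ≤ ∑ v, x v := by
  set A := Finset.univ.filter (fun v => 0 < x v ∧ x v < 1/2) with hAdef
  set B := Finset.univ.filter (fun v => 1/2 < x v ∧ x v < 1) with hBdef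
  have hmemA : ∀ v, v ∈ A ↔ (0 < x v ∧ x v < 1/2) := by
    intro v; rw [hAdef]; simp only [Finset.mem_filter, Finset.mem_univ, true_and]
  have hmemB : ∀ v, v ∈ B ↔ (1/2 < x v ∧ x v < 1) := by
    intro v; rw [hBdef]; simp only [Finset.mem_filter, Finset.mem_univ, true_and]
  have hABdisj : ∀ v, v ∈ B → v ∉ A := by
    intro v hv
    rw [hmemB] at hv; rw [hmemA]
    rintro ⟨p, q⟩; linarith [hv.1]
  have hbadAB : ∀ v, v ∈ badSet x ↔ v ∈ A ∨ v ∈ B := by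
    intro v
    obtain ⟨h0, h1⟩ := hx.1 v
    rw [mem_badSet_iff, hmemA, hmemB]
    constructor
    · intro h
      by_contra hc
      rw [not_or] at hc
      exact h (triple_of h0 h1 hc.1 hc.2)
    · rintro (⟨p, q⟩ | ⟨p, q⟩) (h | h | h) <;> linarith
  by_cases hcard : B.card ≤ A.card
  · -- direction 1: A down toward 0, B up toward 1
    set d : V → ℝ := fun v => if v ∈ A then x v else 1 - x v with hd
    obtain ⟨v₀, hv₀, hmin⟩ := Finset.exists_min_image (badSet x) d hbad
    set ε := d v₀ with hε
    have hεA : ∀ v ∈ A, ε ≤ x v := by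
      intro v hv
      have := hmin v ((hbadAB v).mpr (Or.inl hv))
      simpa only [hd, if_pos hv] using this
    have hεB : ∀ v ∈ B, ε ≤ 1 - x v := by
      intro v hv
      have := hmin v ((hbadAB v).mpr (Or.inr hv))
      simpa only [hd, if_neg (hABdisj v hv)] using this
    have hεpos : 0 ≤ ε := by
      rcases (hbadAB v₀).mp hv₀ with h | h
      · have : ε = x v₀ := by simp only [hε, hd, if_pos h]
        rw [this]; exact le_of_lt ((hmemA v₀).mp h).1
      · have : ε = 1 - x v₀ := by simp only [hε, hd, if_neg (hABdisj v₀ h)]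
        rw [this]; linarith [((hmemB v₀).mp h).2]
    obtain ⟨hcov, hsum, hsub⟩ := pert_lemma G x hx ε
      (fun v p q => by
        have := hεA v ((hmemA v).mpr ⟨p, q⟩)
        constructor <;> linarith)
      (fun v p q => by
        have := hεB v ((hmemB v).mpr ⟨p, q⟩)
        constructor <;> linarith)
    refine ⟨pertF x ε, hcov, ?_, ?_⟩
    · apply Finset.card_lt_card
      rw [Finset.ssubset_iff_of_subset hsub]
      refine ⟨v₀, hv₀, ?_⟩
      simp only [mem_badSet_iff, not_not]
      rcases (hbadAB v₀).mp hv₀ with hm | hm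
      · left
        have hx0 : pertF x ε v₀ = x v₀ - ε := by
          unfold pertF
          rw [if_pos ((hmemA v₀).mp hm)]
        have hεv : ε = x v₀ := by simp only [hε, hd, if_pos hm]
        rw [hx0, hεv]; ring
      · right; right
        have hx0 : pertF x ε v₀ = x v₀ + ε := by
          unfold pertF
          rw [if_neg (by rintro ⟨p, q⟩; linarith [((hmemB v₀).mp hm).1]),
            if_pos ((hmemB v₀).mp hm)]
        have hεv : ε = 1 - x v₀ := by simp only [hε, hd, if_neg (hABdisj v₀ hm)]
        rw [hx0, hεv]; ring
    · rw [hsum, ← hAdef, ← hBdef]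
      have : (B.card : ℝ) - A.card ≤ 0 := by
        have := (Nat.cast_le (α := ℝ)).mpr hcard
        linarith
      nlinarith
  · -- direction 2: A up toward 1/2, B down toward 1/2
    push_neg at hcard
    set d : V → ℝ := fun v => if v ∈ A then 1/2 - x v else x v - 1/2 with hd
    obtain ⟨v₀, hv₀, hmin⟩ := Finset.exists_min_image (badSet x) d hbad
    set δ := d v₀ with hδ
    have hδA : ∀ v ∈ A, δ ≤ 1/2 - x v := by
      intro v hv
      have := hmin v ((hbadAB v).mpr (Or.inl hv))
      simpa only [hd, if_pos hv] using this
    have hδB : ∀ v ∈ B, δ ≤ x v - 1/2 := by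
      intro v hv
      have := hmin v ((hbadAB v).mpr (Or.inr hv))
      simpa only [hd, if_neg (hABdisj v hv)] using this
    have hδpos : 0 ≤ δ := by
      rcases (hbadAB v₀).mp hv₀ with h | h
      · have : δ = 1/2 - x v₀ := by simp only [hδ, hd, if_pos h]
        rw [this]; linarith [((hmemA v₀).mp h).2]
      · have : δ = x v₀ - 1/2 := by simp only [hδ, hd, if_neg (hABdisj v₀ h)]
        rw [this]; linarith [((hmemB v₀).mp h).1]
    obtain ⟨hcov, hsum, hsub⟩ := pert_lemma G x hx (-δ)
      (fun v p q => by
        have := hδA v ((hmemA v).mpr ⟨p, q⟩)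
        constructor <;> linarith)
      (fun v p q => by
        have := hδB v ((hmemB v).mpr ⟨p, q⟩)
        constructor <;> linarith)
    refine ⟨pertF x (-δ), hcov, ?_, ?_⟩
    · apply Finset.card_lt_card
      rw [Finset.ssubset_iff_of_subset hsub]
      refine ⟨v₀, hv₀, ?_⟩
      simp only [mem_badSet_iff, not_not]
      rcases (hbadAB v₀).mp hv₀ with hm | hm
      · right; left
        have hx0 : pertF x (-δ) v₀ = x v₀ - (-δ) := by
          unfold pertF
          rw [if_pos ((hmemA v₀).mp hm)]
        have hδv : δ = 1/2 - x v₀ := by simp only [hδ, hd, if_pos hm]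
        rw [hx0, hδv]; ring
      · right; left
        have hx0 : pertF x (-δ) v₀ = x v₀ + (-δ) := by
          unfold pertF
          rw [if_neg (by rintro ⟨p, q⟩; linarith [((hmemB v₀).mp hm).1]),
            if_pos ((hmemB v₀).mp hm)]
        have hδv : δ = x v₀ - 1/2 := by simp only [hδ, hd, if_neg (hABdisj v₀ hm)]
        rw [hx0, hδv]; ring
    · rw [hsum, ← hAdef, ← hBdef]
      have : 0 ≤ (B.card : ℝ) - A.card := by
        have := (Nat.cast_le (α := ℝ)).mpr (le_of_lt hcard)
        linarith
      nlinarith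

open scoped Classical in
lemma reduce_lemma (G : SimpleGraph V) :
    ∀ n : ℕ, ∀ x : V → ℝ, IsFracCover G x → (badSet x).card ≤ n →
      ∃ y : V → ℝ, IsFracCover G y ∧ (∀ v, y v = 0 ∨ y v = 1/2 ∨ y v = 1) ∧
        ∑ v, y v ≤ ∑ v, x v := by
  intro n
  induction n with
  | zero =>
    intro x hx hc
    refine ⟨x, hx, ?_, le_refl _⟩
    intro v
    by_contra h
    have : v ∈ badSet x := (mem_badSet_iff x v).mpr h
    have := Finset.card_pos.mpr ⟨v, this⟩
    omega
  | succ n ih =>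
    intro x hx hc
    by_cases hb : (badSet x).Nonempty
    · obtain ⟨y, hy, hlt, hle⟩ := step_lemma G x hx hb
      obtain ⟨z, hz, hzh, hzle⟩ := ih y hy (by omega)
      exact ⟨z, hz, hzh, le_trans hzle hle⟩
    · refine ⟨x, hx, ?_, le_refl _⟩
      intro v
      by_contra h
      exact hb ⟨v, (mem_badSet_iff x v).mpr h⟩

noncomputable def tv : Fin 3 → ℝ := ![0, 1/2, 1]

lemma tv_mem (i : Fin 3) : tv i = 0 ∨ tv i = 1/2 ∨ tv i = 1 := by
  fin_cases i <;> simp [tv]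

/-- **half-integrality, Nemhauser–Trotter.** Some optimal fractional
vertex cover takes only the values `0`, `1/2`, `1`. -/
theorem half_integrality (G : SimpleGraph V) :
    ∃ x : V → ℝ, IsFracCover G x ∧ ∑ v, x v = LPopt G ∧
      ∀ v : V, x v = 0 ∨ x v = 1 / 2 ∨ x v = 1 := by
  classical
  set F : Finset (V → Fin 3) :=
    Finset.univ.filter (fun f => IsFracCover G (fun v => tv (f v))) with hF
  have hFne : F.Nonempty := by
    refine ⟨fun _ => 1, ?_⟩
    rw [hF, Finset.mem_filter]
    refine ⟨Finset.mem_univ _, ⟨fun v => by norm_num [tv], fun u v _ => by norm_num [tv]⟩⟩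
  obtain ⟨f₀, hf₀F, hf₀⟩ := Finset.exists_mem_eq_inf' hFne (fun f => ∑ v, tv (f v))
  have hf₀cov : IsFracCover G (fun v => tv (f₀ v)) := by
    rw [hF, Finset.mem_filter] at hf₀F; exact hf₀F.2
  set m := F.inf' hFne (fun f => ∑ v, tv (f v)) with hm
  -- m is a lower bound of the LP feasible-value set
  have hlb : ∀ s ∈ {s : ℝ | ∃ x : V → ℝ, IsFracCover G x ∧ s = ∑ v, x v}, m ≤ s := by
    rintro s ⟨x, hx, rfl⟩
    obtain ⟨y, hy, hyh, hyle⟩ := reduce_lemma G (badSet x).card x hx (le_refl _)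
    -- encode y as a Fin 3 valued function
    set f : V → Fin 3 := fun v => if y v = 0 then 0 else if y v = 1/2 then 1 else 2 with hfdef
    have hfy : ∀ v, tv (f v) = y v := by
      intro v
      rcases hyh v with h | h | h <;>
        simp [hfdef, h, tv] <;> norm_num
    have hfF : f ∈ F := by
      rw [hF, Finset.mem_filter]
      refine ⟨Finset.mem_univ _, ?_⟩
      have : (fun v => tv (f v)) = y := funext hfy
      rw [this]; exact hy
    calc m ≤ ∑ v, tv (f v) := Finset.inf'_le _ hfF
      _ = ∑ v, y v := Finset.sum_congr rfl (fun v _ => hfy v)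
      _ ≤ ∑ v, x v := hyle
  have hmem : m ∈ {s : ℝ | ∃ x : V → ℝ, IsFracCover G x ∧ s = ∑ v, x v} := by
    exact ⟨fun v => tv (f₀ v), hf₀cov, by simpa using hf₀⟩
  have hLP : LPopt G = m := by
    unfold LPopt
    exact le_antisymm (csInf_le ⟨m, hlb⟩ hmem) (le_csInf ⟨m, hmem⟩ hlb)
  refine ⟨fun v => tv (f₀ v), hf₀cov, ?_, fun v => tv_mem (f₀ v)⟩
  rw [hLP]; simpa using hf₀.symm
end
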